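/- The Price of Anarchy of M_AV is at least 2. Concretely: let a, a', s > 0 and T = (a'+s)/(a'+s+a). For every ε ∈ (0,1), consider the instance with 2 experts and 2 proposals, all g_{ij} = 0, where expert 1 has w_1 = 1+ε, p_{11} = T, p_{12} = 1, and expert 2 has w_2 = 1−ε, p_{21} = 1, p_{22} = 0. Then the voting profile in which expert 1 approves only proposal 2 and expert 2 approves only proposal 1 is an exact semi-strategic PNE of M_AV (a PNE that is semi-strategically consistent); its winner is proposal 2, and Qual[2] = 1+ε while Qual[1] = 2. -/

import Mathlib

open Finset

/-- Total approving weight of proposal `j` under voting profile `r`. -/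
def approvalWeight {n k : ℕ} (w : Fin n → ℝ) (r : Fin n → Fin k → Bool) (j : Fin k) : ℝ :=
  ∑ i, if r i j then w i else 0

/-- The winner of the approval-voting mechanism `M_AV`: the proposal of smallest index
maximizing the total approving weight; no proposal is selected when every proposal has zero
total approving weight. -/
noncomputable def winner {n k : ℕ} (w : Fin n → ℝ) (r : Fin n → Fin k → Bool) :
    Option (Fin k) :=
  if h : ∀ j, approvalWeight w r j = 0 then none
  else
    some ((Finset.univ.filter fun j => ∀ j', approvalWeight w r j' ≤ approvalWeight w r j).min'
      (by
        obtain ⟨j0, -⟩ := not_forall.mp h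
        obtain ⟨j, -, hj⟩ :=
          Finset.exists_max_image Finset.univ (approvalWeight w r) ⟨j0, Finset.mem_univ j0⟩
        exact ⟨j, Finset.mem_filter.mpr
          ⟨Finset.mem_univ j, fun j' => hj j' (Finset.mem_univ j')⟩⟩))

/-- Expected utility of expert `i` under profile `r`, beliefs `p`, external rewards `g`,
and reward parameters `a`, `a'`, `s`. -/
noncomputable def utility {n k : ℕ} (w : Fin n → ℝ) (p g : Fin n → Fin k → ℝ)
    (a a' s : ℝ) (r : Fin n → Fin k → Bool) (i : Fin n) : ℝ :=
  match winner w r with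
  | none => 0
  | some j => g i j * p i j + (if r i j then a * p i j - s * (1 - p i j) else a' * (1 - p i j))

/-- Estimated quality of proposal `j` with respect to threshold `T`. -/
noncomputable def qual {n k : ℕ} (w : Fin n → ℝ) (p : Fin n → Fin k → ℝ) (T : ℝ)
    (j : Fin k) : ℝ :=
  ∑ i, if T ≤ p i j then w i else 0

/-- The profile obtained from `r` by flipping the single vote of expert `i` on proposal `j`. -/
def flipVote {n k : ℕ} (r : Fin n → Fin k → Bool) (i : Fin n) (j : Fin k) :
    Fin n → Fin k → Bool :=
  Function.update r i (Function.update (r i) j (!(r i j)))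

/-- A profile is semi-strategically consistent if flipping any dishonest vote to its honest
value strictly decreases the deviating expert's utility. -/
def semiStrategicConsistent {n k : ℕ} (w : Fin n → ℝ) (p g : Fin n → Fin k → ℝ)
    (a a' s T : ℝ) (r : Fin n → Fin k → Bool) : Prop :=
  ∀ i j, ((r i j = true ∧ p i j < T) ∨ (r i j = false ∧ T ≤ p i j)) →
    utility w p g a a' s (flipVote r i j) i < utility w p g a a' s r i

lemma winner_eq_one {n : ℕ} (w : Fin n → ℝ) (r : Fin n → Fin 2 → Bool)
    (h : approvalWeight w r 0 < approvalWeight w r 1) :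
    winner w r = some 1 := by
  rw [winner, dif_neg]
  · congr 1
    have hfilter : (univ.filter fun j => ∀ j', approvalWeight w r j' ≤ approvalWeight w r j)
        = {1} := by
      ext j
      fin_cases j <;> simp [Fin.forall_fin_two, h.le, not_le.mpr h]
    simp only [hfilter, Finset.min'_singleton]
  · intro hall
    rw [hall 0, hall 1] at h
    exact lt_irrefl _ h

lemma winner_eq_zero {n : ℕ} (w : Fin n → ℝ) (r : Fin n → Fin 2 → Bool)
    (h : approvalWeight w r 1 ≤ approvalWeight w r 0)
    (h0 : approvalWeight w r 0 ≠ 0) :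
    winner w r = some 0 := by
  rw [winner, dif_neg]
  · congr 1
    refine le_antisymm (Finset.min'_le _ _ ?_) (Fin.zero_le _)
    refine Finset.mem_filter.mpr ⟨Finset.mem_univ _, ?_⟩
    intro j'
    fin_cases j' <;> simp [h]
  · intro hall
    exact h0 (hall 0)

/-- Theorem 3.7 (Price of Anarchy at least 2): with `a, a', s > 0`, `T = (a'+s)/(a'+s+a)`,
and `ε ∈ (0,1)`, in the instance with two experts of weights `1+ε` and `1−ε`, beliefs
`(T, 1)` and `(1, 0)`, and zero external rewards, the profile where expert 1 approves only
proposal 2 and expert 2 approves only proposal 1 is an exact semi-strategic pure Nash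
equilibrium of `M_AV`; its winner is proposal 2, with `Qual[2] = 1+ε` while `Qual[1] = 2`. -/
theorem stmt11 (a a' s : ℝ) (ha : 0 < a) (ha' : 0 < a') (hs : 0 < s)
    (T : ℝ) (hT : T = (a' + s) / (a' + s + a))
    (ε : ℝ) (hε : ε ∈ Set.Ioo (0:ℝ) 1) :
    let w : Fin 2 → ℝ := ![1 + ε, 1 - ε]
    let p : Fin 2 → Fin 2 → ℝ := ![![T, 1], ![1, 0]]
    let g : Fin 2 → Fin 2 → ℝ := fun _ _ => 0
    let r : Fin 2 → Fin 2 → Bool := ![![false, true], ![true, false]]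
    (∀ i (r' : Fin 2 → Bool),
      utility w p g a a' s (Function.update r i r') i ≤ utility w p g a a' s r i) ∧
    semiStrategicConsistent w p g a a' s T r ∧
    winner w r = some 1 ∧
    qual w p T 1 = 1 + ε ∧
    qual w p T 0 = 2 := by
  obtain ⟨hε0, hε1⟩ := hε
  intro w p g r
  have hD : 0 < a' + s + a := by linarith
  have hTval : T * (a' + s + a) = a' + s := by rw [hT]; field_simp
  have hT0 : 0 < T := by nlinarith
  have hT1 : T < 1 := by nlinarith
  have hkey1 : a * T - s * (1 - T) < a := by nlinarith
  have hkey2 : a' * (1 - T) ≤ a := by nlinarith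
  have hAW0 : approvalWeight w r 0 = 1 - ε := by
    simp [approvalWeight, Fin.sum_univ_two, r, w]
  have hAW1 : approvalWeight w r 1 = 1 + ε := by
    simp [approvalWeight, Fin.sum_univ_two, r, w]
  have hwin : winner w r = some 1 :=
    winner_eq_one w r (by rw [hAW0, hAW1]; linarith)
  have hu0 : utility w p g a a' s r 0 = a := by
    unfold utility; rw [hwin]; simp [r, p, g]
  have hu1 : utility w p g a a' s r 1 = a' := by
    unfold utility; rw [hwin]; simp [r, p, g]
  refine ⟨?_, ?_, hwin, ?_, ?_⟩
  · -- PNE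
    intro i r'
    fin_cases i
    · -- expert 0
      show utility w p g a a' s (Function.update r 0 r') 0 ≤ utility w p g a a' s r 0
      rw [hu0]
      have hA0 : approvalWeight w (Function.update r 0 r') 0
          = (if r' 0 then 1 + ε else 0) + (1 - ε) := by
        simp [approvalWeight, Fin.sum_univ_two, Function.update, r, w]
      have hA1 : approvalWeight w (Function.update r 0 r') 1
          = (if r' 1 then 1 + ε else 0) := by
        simp [approvalWeight, Fin.sum_univ_two, Function.update, r, w]
      cases h0 : r' 0 <;> cases h1 : r' 1 <;>
        simp [h0, h1] at hA0 hA1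
      · -- false false : winner 0, utility a'(1-T)
        have hwz : winner w (Function.update r 0 r') = some 0 :=
          winner_eq_zero w _ (by rw [hA0, hA1]; linarith) (by rw [hA0]; intro h; linarith)
        unfold utility; rw [hwz]
        simp [Function.update, h0, p, g]
        linarith
      · -- false true : winner 1
        have hwz : winner w (Function.update r 0 r') = some 1 :=
          winner_eq_one w _ (by rw [hA0, hA1]; linarith)
        unfold utility; rw [hwz]
        simp [Function.update, h1, p, g]
      · -- true false : winner 0
        have hwz : winner w (Function.update r 0 r') = some 0 :=
          winner_eq_zero w _ (by rw [hA0, hA1]; linarith) (by rw [hA0]; intro h; linarith)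
        unfold utility; rw [hwz]
        simp [Function.update, h0, p, g]
        linarith
      · -- true true : winner 0
        have hwz : winner w (Function.update r 0 r') = some 0 :=
          winner_eq_zero w _ (by rw [hA0, hA1]; linarith) (by rw [hA0]; intro h; linarith)
        unfold utility; rw [hwz]
        simp [Function.update, h0, p, g]
        linarith
    · -- expert 1
      show utility w p g a a' s (Function.update r 1 r') 1 ≤ utility w p g a a' s r 1
      rw [hu1]
      have hA0 : approvalWeight w (Function.update r 1 r') 0
          = (if r' 0 then 1 - ε else 0) := by
        simp [approvalWeight, Fin.sum_univ_two, Function.update, r, w]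
      have hA1 : approvalWeight w (Function.update r 1 r') 1
          = (1 + ε) + (if r' 1 then 1 - ε else 0) := by
        simp [approvalWeight, Fin.sum_univ_two, Function.update, r, w]
      have hwz : winner w (Function.update r 1 r') = some 1 := by
        apply winner_eq_one
        rw [hA0, hA1]
        cases h0 : r' 0 <;> cases h1 : r' 1 <;> simp <;> linarith
      unfold utility; rw [hwz]
      cases h1 : r' 1 <;> simp [Function.update, h1, p, g] <;> linarith
  · -- semi-strategic consistency
    intro i j hd
    fin_cases i <;> fin_cases j
    · -- (0,0): dishonest, flipping decreases
      show utility w p g a a' s (flipVote r 0 0) 0 < utility w p g a a' s r 0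
      rw [hu0]
      have hA0 : approvalWeight w (flipVote r 0 0) 0 = (1 + ε) + (1 - ε) := by
        simp [approvalWeight, Fin.sum_univ_two, flipVote, Function.update, r, w]
      have hA1 : approvalWeight w (flipVote r 0 0) 1 = 1 + ε := by
        simp [approvalWeight, Fin.sum_univ_two, flipVote, Function.update, r, w]
      have hwz : winner w (flipVote r 0 0) = some 0 :=
        winner_eq_zero w _ (by rw [hA0, hA1]; linarith) (by rw [hA0]; intro h; linarith)
      unfold utility; rw [hwz]
      simp [flipVote, Function.update, r, p, g]
      linarith
    · simp [r, p] at hd; linarith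
    · simp [r, p] at hd; linarith
    · simp [r, p] at hd; linarith
  · simp [qual, Fin.sum_univ_two, p, w, hT1.le, not_le.mpr hT0]
  · simp [qual, Fin.sum_univ_two, p, w, hT1.le]
    ring
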